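/- Let q > 1, q ≠ 2, and let g = h_q⁻¹ be the inverse of h_q(x) = x + |x|^(q-1)·sgn(x). There exist constants d_lo, d_up > 0 such that for all x₁ > 0 and x₂ with |x₂| ≤ x₁ and x₂ ≠ x₁: 1/(1 + d_up·g(x₁)^(q-2)) ≤ (g(x₁) - g(x₂))/(x₁ - x₂) ≤ 1/(1 + d_lo·g(x₁)^(q-2)). -/

import Mathlib

open Real

namespace Stmt3Aux

noncomputable def hf (q : ℝ) (y : ℝ) : ℝ := y + |y| ^ (q - 1) * Real.sign y

lemma sign_mul_pos {c x : ℝ} (hc : 0 < c) : Real.sign (c * x) = Real.sign x := by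
  rcases lt_trichotomy x 0 with h | h | h
  · rw [Real.sign_of_neg h, Real.sign_of_neg (mul_neg_of_pos_of_neg hc h)]
  · simp [h]
  · rw [Real.sign_of_pos h, Real.sign_of_pos (mul_pos hc h)]

lemma phi_mono (q : ℝ) (hq : 1 < q) :
    Monotone (fun y : ℝ => |y| ^ (q - 1) * Real.sign y) := by
  have hp : (0:ℝ) < q - 1 := by linarith
  intro a b hab
  dsimp only
  rcases lt_trichotomy a 0 with ha | ha | ha
  · rcases lt_trichotomy b 0 with hb | hb | hb
    · simp only [Real.sign_of_neg ha, Real.sign_of_neg hb, mul_neg_one, neg_le_neg_iff]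
      apply Real.rpow_le_rpow (abs_nonneg _) _ hp.le
      rw [abs_of_neg ha, abs_of_neg hb]; linarith
    · subst hb
      simp only [Real.sign_of_neg ha, Real.sign_zero, mul_zero, mul_neg_one]
      exact neg_nonpos_of_nonneg (by positivity)
    · have h1 : |a| ^ (q-1) * Real.sign a ≤ 0 := by
        rw [Real.sign_of_neg ha, mul_neg_one]
        exact neg_nonpos_of_nonneg (by positivity)
      have h2 : (0:ℝ) ≤ |b| ^ (q-1) * Real.sign b := by
        rw [Real.sign_of_pos hb, mul_one]; positivity
      linarith
  · subst ha
    simp only [Real.sign_zero, mul_zero, abs_zero]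
    have hb : 0 ≤ b := hab
    rcases eq_or_lt_of_le hb with rfl | hb
    · simp
    · rw [Real.sign_of_pos hb, mul_one]; positivity
  · have hb : 0 < b := lt_of_lt_of_le ha hab
    rw [Real.sign_of_pos ha, Real.sign_of_pos hb, mul_one, mul_one]
    apply Real.rpow_le_rpow (abs_nonneg _) _ hp.le
    rw [abs_of_pos ha, abs_of_pos hb]; exact hab

lemma hf_strictMono (q : ℝ) (hq : 1 < q) : StrictMono (hf q) :=
  strictMono_id.add_monotone (phi_mono q hq)

lemma hf_neg (q y : ℝ) : hf q (-y) = - hf q y := by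
  simp [hf, Real.sign_neg]; ring

lemma hf_zero (q : ℝ) : hf q 0 = 0 := by simp [hf]

lemma hf_surj (q : ℝ) (hq : 1 < q) : Function.Surjective (hf q) := by
  have hp : (0:ℝ) < q - 1 := by linarith
  have key : ∀ x : ℝ, 0 ≤ x → ∃ y, hf q y = x := by
    intro x hx
    have hcont : ContinuousOn (hf q) (Set.Icc 0 x) := by
      apply ContinuousOn.congr (f := fun y : ℝ => y + y ^ (q-1))
      · exact continuousOn_id.add (continuousOn_id.rpow_const
          (fun y hy => Or.inr hp.le))
      · intro y hy
        rcases eq_or_lt_of_le hy.1 with rfl | hy0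
        · simp [hf, Real.zero_rpow hp.ne']
        · simp [hf, abs_of_pos hy0, Real.sign_of_pos hy0]
    have hmem : x ∈ Set.Icc (hf q 0) (hf q x) := by
      constructor
      · rw [hf_zero]; exact hx
      · rcases eq_or_lt_of_le hx with rfl | hx0
        · rw [hf_zero]
        · simp only [hf, abs_of_pos hx0, Real.sign_of_pos hx0, mul_one]
          nlinarith [Real.rpow_nonneg hx (q-1)]
    obtain ⟨y, _, hy⟩ := intermediate_value_Icc hx hcont hmem
    exact ⟨y, hy⟩
  intro x
  rcases le_total 0 x with hx | hx
  · exact key x hx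
  · obtain ⟨y, hy⟩ := key (-x) (by linarith)
    exact ⟨-y, by rw [hf_neg, hy, neg_neg]⟩

lemma key_bounds (q : ℝ) (hq : 1 < q) {z : ℝ} (hz1 : -1 ≤ z) (hz2 : z < 1) :
    min 1 (q-1) / 2 * (1 - z) ≤ 1 - |z| ^ (q-1) * Real.sign z ∧
    1 - |z| ^ (q-1) * Real.sign z ≤ 2 * max 1 (q-1) * (1 - z) := by
  have hp : (0:ℝ) < q - 1 := by linarith
  set p := q - 1 with hpdef
  rcases lt_trichotomy z 0 with hz | hz | hz
  · rw [Real.sign_of_neg hz, abs_of_neg hz, mul_neg_one, sub_neg_eq_add]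
    have ht1 : (0:ℝ) ≤ -z := by linarith
    have ht2 : -z ≤ 1 := by linarith
    have htp0 : 0 ≤ (-z) ^ p := Real.rpow_nonneg ht1 p
    have htp1 : (-z) ^ p ≤ 1 := Real.rpow_le_one ht1 ht2 hp.le
    constructor
    · have h1 : min 1 p / 2 ≤ 1/2 := by
        have := min_le_left 1 p; linarith
      nlinarith
    · have h2 : (2:ℝ) ≤ 2 * max 1 p := by
        have := le_max_left 1 p; nlinarith
      nlinarith
  · subst hz
    simp only [Real.sign_zero, mul_zero, sub_zero]
    constructor
    · have := min_le_left 1 p; linarith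
    · have := le_max_left 1 p; nlinarith
  · rw [Real.sign_of_pos hz, abs_of_pos hz, mul_one]
    have hz0 : (0:ℝ) ≤ z := hz.le
    rcases le_total p 1 with hple | hpge
    · -- p ≤ 1 : z ≤ z^p ≤ 1 + p(z-1)
      have hup : z ≤ z ^ p := by
        calc z = z ^ (1:ℝ) := (Real.rpow_one z).symm
        _ ≤ z ^ p := Real.rpow_le_rpow_of_exponent_ge hz hz2.le hple
      have hlow : z ^ p ≤ 1 + p * (z - 1) := by
        have := rpow_one_add_le_one_add_mul_self (s := z - 1) (by linarith) hp.le hple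
        simpa using this
      constructor
      · have hmin : min 1 p = p := min_eq_right hple
        rw [hmin]; nlinarith
      · have hmax : max 1 p = 1 := max_eq_left hple
        rw [hmax]; nlinarith
    · -- 1 ≤ p : 1 + p(z-1) ≤ z^p ≤ z
      have hup : z ^ p ≤ z := by
        calc z ^ p ≤ z ^ (1:ℝ) := Real.rpow_le_rpow_of_exponent_ge hz hz2.le hpge
        _ = z := Real.rpow_one z
      have hlow : 1 + p * (z - 1) ≤ z ^ p := by
        have := one_add_mul_self_le_rpow_one_add (s := z - 1) (by linarith) hpge
        simpa using this
      constructor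
      · have hmin : min 1 p = 1 := min_eq_left hpge
        rw [hmin]; nlinarith
      · have hmax : max 1 p = p := max_eq_right hpge
        rw [hmax]; nlinarith

end Stmt3Aux

/-- Difference-quotient bounds for the inverse `g = h_q⁻¹` of
`h_q x = x + |x|^(q-1) * sgn x`, for `q > 1`, `q ≠ 2`. -/
theorem stmt_3 (q : ℝ) (hq : 1 < q) (hq2 : q ≠ 2) :
    letI g := Function.invFun (fun x : ℝ => x + |x| ^ (q - 1) * Real.sign x)
    ∃ dlo dup : ℝ, 0 < dlo ∧ 0 < dup ∧
      ∀ x₁ x₂ : ℝ, 0 < x₁ → |x₂| ≤ x₁ → x₂ ≠ x₁ →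
        1 / (1 + dup * g x₁ ^ (q - 2)) ≤ (g x₁ - g x₂) / (x₁ - x₂) ∧
        (g x₁ - g x₂) / (x₁ - x₂) ≤ 1 / (1 + dlo * g x₁ ^ (q - 2)) := by
  set g := Function.invFun (fun x : ℝ => x + |x| ^ (q - 1) * Real.sign x) with hgdef
  have hp : (0:ℝ) < q - 1 := by linarith
  have hmono := Stmt3Aux.hf_strictMono q hq
  have hsurj := Stmt3Aux.hf_surj q hq
  have hg : ∀ x, Stmt3Aux.hf q (g x) = x := fun x => Function.invFun_eq (hsurj x)
  have hdlo : (0:ℝ) < min 1 (q-1) / 2 := by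
    have := lt_min one_pos hp; linarith
  have hdup : (0:ℝ) < 2 * max 1 (q-1) := by
    have := lt_of_lt_of_le one_pos (le_max_left 1 (q-1)); linarith
  refine ⟨min 1 (q-1) / 2, 2 * max 1 (q-1), hdlo, hdup, ?_⟩
  intro x₁ x₂ hx₁ hx₂ hne
  set y₁ := g x₁ with hy₁def
  set y₂ := g x₂ with hy₂def
  have e₁ : Stmt3Aux.hf q y₁ = x₁ := hg x₁
  have e₂ : Stmt3Aux.hf q y₂ = x₂ := hg x₂
  have hy₁ : 0 < y₁ := by
    have : Stmt3Aux.hf q 0 < Stmt3Aux.hf q y₁ := by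
      rw [Stmt3Aux.hf_zero, e₁]; exact hx₁
    exact hmono.lt_iff_lt.mp this
  have hx₂lt : x₂ < x₁ := lt_of_le_of_ne (le_trans (le_abs_self x₂) hx₂) hne
  have hy₂lt : y₂ < y₁ := hmono.lt_iff_lt.mp (by rw [e₁, e₂]; exact hx₂lt)
  have hy₂ge : -y₁ ≤ y₂ := by
    have h1 : Stmt3Aux.hf q (-y₁) ≤ Stmt3Aux.hf q y₂ := by
      rw [Stmt3Aux.hf_neg, e₁, e₂]
      have := neg_abs_le x₂; linarith
    exact hmono.le_iff_le.mp h1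
  set z := y₂ / y₁ with hzdef
  have hy₂eq : y₂ = y₁ * z := by rw [hzdef]; field_simp
  have hz1 : -1 ≤ z := by
    rw [hzdef, le_div_iff₀ hy₁]; linarith
  have hz2 : z < 1 := (div_lt_one hy₁).mpr hy₂lt
  obtain ⟨key1, key2⟩ := Stmt3Aux.key_bounds q hq hz1 hz2
  set A := |z| ^ (q-1) * Real.sign z with hAdef
  set P := y₁ ^ (q-1) with hPdef
  set Y := y₁ ^ (q-2) with hYdef
  have hP : 0 < P := Real.rpow_pos_of_pos hy₁ _
  have hY : 0 < Y := Real.rpow_pos_of_pos hy₁ _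
  have hPY : P = Y * y₁ := by
    rw [hPdef, hYdef, ← Real.rpow_add_one hy₁.ne' (q-2)]
    ring_nf
  have hphi2 : |y₂| ^ (q-1) * Real.sign y₂ = P * A := by
    rw [hy₂eq, abs_mul, abs_of_pos hy₁, Real.mul_rpow hy₁.le (abs_nonneg z),
      Stmt3Aux.sign_mul_pos hy₁, hAdef, hPdef]
    ring
  have hx1eq : x₁ = y₁ + P := by
    rw [← e₁]
    simp only [Stmt3Aux.hf, abs_of_pos hy₁, Real.sign_of_pos hy₁, mul_one, hPdef]
  have hx2eq : x₂ = y₁ * z + P * A := by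
    rw [← e₂]
    simp only [Stmt3Aux.hf]
    rw [hphi2, hy₂eq]
  have hD : 0 < x₁ - x₂ := by linarith
  have h1dup : 0 < 1 + 2 * max 1 (q-1) * Y := by positivity
  have h1dlo : 0 < 1 + min 1 (q-1) / 2 * Y := by positivity
  have hk2P := mul_le_mul_of_nonneg_left key2 hP.le
  have hk1P := mul_le_mul_of_nonneg_left key1 hP.le
  have e3 : x₁ - x₂ = (y₁ - y₂) + P * (1 - A) := by
    rw [hx1eq, hx2eq]
    rw [hy₂eq]; ring
  have e4 : (y₁ - y₂) * (1 + 2 * max 1 (q-1) * Y) =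
      (y₁ - y₂) + P * (2 * max 1 (q-1) * (1 - z)) := by
    rw [hy₂eq, hPY]; ring
  have e5 : (y₁ - y₂) * (1 + min 1 (q-1) / 2 * Y) =
      (y₁ - y₂) + P * (min 1 (q-1) / 2 * (1 - z)) := by
    rw [hy₂eq, hPY]; ring
  constructor
  · rw [div_le_div_iff₀ h1dup hD]
    linarith [hk2P, e3, e4]
  · rw [div_le_div_iff₀ hD h1dlo]
    linarith [hk1P, e3, e5]
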